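/- Let C be a category equipped with a dagger, a zero object, binary dagger biproducts, and dagger equalizers of all parallel pairs, in which every dagger monomorphism is a kernel of some morphism, and let K be a simple object of C which is a generator. Let m : M ⟶ H be a dagger monomorphism and let m⊥ : M⊥ ⟶ H be a kernel of m† which is a dagger monomorphism. Then m and m⊥ exhibit H as a dagger biproduct of M and M⊥; in particular (m† ≫ m) + (m⊥† ≫ m⊥) = 𝟙 H, where addition of parallel morphisms is defined via the biproduct structure. -/

import Mathlib

open CategoryTheory CategoryTheory.Limits

/-- In a dagger category with a zero object, binary dagger biproducts, dagger
equalizers, every dagger monomorphism a kernel, and a simple generator `K`: a dagger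
monomorphism `m : M ⟶ H` together with a dagger-monomorphic kernel `m⊥ : M⊥ ⟶ H` of `m†`
exhibits `H` as a dagger biproduct of `M` and `M⊥`; in particular
`(m† ≫ m) + (m⊥† ≫ m⊥) = 𝟙 H` for the biproduct-induced addition. -/
theorem daggerMono_orthocomplement_biproduct
    {C : Type*} [Category C] [HasZeroObject C] [HasZeroMorphisms C] [HasBinaryBiproducts C]
    -- the dagger
    (dag : ∀ {A B : C}, (A ⟶ B) → (B ⟶ A))
    (dag_id : ∀ A : C, dag (𝟙 A) = 𝟙 A)
    (dag_comp : ∀ {A B D : C} (f : A ⟶ B) (g : B ⟶ D), dag (f ≫ g) = dag g ≫ dag f)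
    (dag_dag : ∀ {A B : C} (f : A ⟶ B), dag (dag f) = f)
    -- the binary biproducts are dagger biproducts
    (dag_fst : ∀ A B : C, dag (biprod.fst : A ⊞ B ⟶ A) ≫ biprod.fst = 𝟙 A)
    (dag_snd : ∀ A B : C, dag (biprod.snd : A ⊞ B ⟶ B) ≫ biprod.snd = 𝟙 B)
    (dag_snd_fst : ∀ A B : C, dag (biprod.snd : A ⊞ B ⟶ B) ≫ biprod.fst = 0)
    (dag_fst_snd : ∀ A B : C, dag (biprod.fst : A ⊞ B ⟶ A) ≫ biprod.snd = 0)
    -- dagger equalizers of all parallel pairs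
    (dag_eq : ∀ {A B : C} (f g : A ⟶ B), ∃ (E : C) (e : E ⟶ A) (w : e ≫ f = e ≫ g),
      e ≫ dag e = 𝟙 E ∧ Nonempty (IsLimit (Fork.ofι e w)))
    -- every dagger monomorphism is a kernel of some morphism
    (dag_mono_ker : ∀ {A B : C} (m : A ⟶ B), m ≫ dag m = 𝟙 A →
      ∃ (D : C) (h : B ⟶ D) (w : m ≫ h = 0), Nonempty (IsLimit (KernelFork.ofι m w)))
    -- K is a simple object which is a generator
    (K : C)
    (K_nonzero : ¬ IsZero K)
    (K_simple : ∀ {A : C} (m : A ⟶ K), Mono m → m = 0 ∨ IsIso m)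
    (K_gen : ∀ {A B : C} (f g : A ⟶ B), f ≠ g → ∃ x : K ⟶ A, x ≫ f ≠ x ≫ g)
    -- a dagger monomorphism m and a dagger-monomorphic kernel m⊥ of m†
    {M Mperp H : C} (m : M ⟶ H) (hm : m ≫ dag m = 𝟙 M)
    (mperp : Mperp ⟶ H) (hmperp : mperp ≫ dag mperp = 𝟙 Mperp)
    (wperp : mperp ≫ dag m = 0)
    (hker : Nonempty (IsLimit (KernelFork.ofι mperp wperp))) :
    ∃ (h1 : m ≫ dag mperp = 0),
      Nonempty (BinaryBicone.IsBilimit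
        { pt := H
          fst := dag m
          snd := dag mperp
          inl := m
          inr := mperp
          inl_fst := hm
          inl_snd := h1
          inr_fst := wperp
          inr_snd := hmperp }) ∧
      biprod.lift (𝟙 H) (𝟙 H) ≫ biprod.map (dag m ≫ m) (dag mperp ≫ mperp) ≫
        biprod.desc (𝟙 H) (𝟙 H) = 𝟙 H := by
  open ZeroObject in
  -- the dagger of a zero morphism is zero
  have dag_zero : ∀ {A B : C}, dag (0 : A ⟶ B) = 0 := by
    intro A B
    have h0 : (0 : A ⟶ B) = (0 : A ⟶ (0 : C)) ≫ (0 : (0 : C) ⟶ B) := by simp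
    rw [h0, dag_comp]
    have hz : dag (0 : (0 : C) ⟶ B) = 0 := (isZero_zero C).eq_of_tgt _ _
    rw [hz, zero_comp]
  -- h1 : m ≫ dag mperp = 0
  have h1 : m ≫ dag mperp = 0 := by
    have h := congrArg dag wperp
    rw [dag_comp, dag_dag, dag_zero] at h
    exact h
  -- basic biproduct computation lemmas
  have comp_lift : ∀ {T T' A B : C} (k : T' ⟶ T) (f : T ⟶ A) (g : T ⟶ B),
      k ≫ biprod.lift f g = biprod.lift (k ≫ f) (k ≫ g) := by
    intros; apply biprod.hom_ext <;> simp
  have desc_comp : ∀ {A B W W' : C} (u : A ⟶ W) (v : B ⟶ W) (k : W ⟶ W'),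
      biprod.desc u v ≫ k = biprod.desc (u ≫ k) (v ≫ k) := by
    intros; apply biprod.hom_ext' <;> simp
  have lift_map : ∀ {T A B A' B' : C} (f : T ⟶ A) (g : T ⟶ B) (u : A ⟶ A') (v : B ⟶ B'),
      biprod.lift f g ≫ biprod.map u v = biprod.lift (f ≫ u) (g ≫ v) := by
    intros; apply biprod.hom_ext <;> simp
  have map_desc : ∀ {A B A' B' W : C} (u : A ⟶ A') (v : B ⟶ B') (p : A' ⟶ W) (q : B' ⟶ W),
      biprod.map u v ≫ biprod.desc p q = biprod.desc (u ≫ p) (v ≫ q) := by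
    intros; apply biprod.hom_ext' <;> simp
  have lift0r : ∀ {T A B W : C} (f : T ⟶ A) (u : A ⟶ W) (v : B ⟶ W),
      biprod.lift f (0 : T ⟶ B) ≫ biprod.desc u v = f ≫ u := by
    intro T A B W f u v
    have h : biprod.lift f (0 : T ⟶ B) = f ≫ biprod.inl := by
      apply biprod.hom_ext <;> simp
    rw [h, Category.assoc, biprod.inl_desc]
  have lift0l : ∀ {T A B W : C} (g : T ⟶ B) (u : A ⟶ W) (v : B ⟶ W),
      biprod.lift (0 : T ⟶ A) g ≫ biprod.desc u v = g ≫ v := by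
    intro T A B W g u v
    have h : biprod.lift (0 : T ⟶ A) g = g ≫ biprod.inr := by
      apply biprod.hom_ext <;> simp
    rw [h, Category.assoc, biprod.inr_desc]
  -- the "sum" S = (dag m ≫ m) + (dag mperp ≫ mperp)
  set S : H ⟶ H :=
    biprod.lift (dag m ≫ m) (dag mperp ≫ mperp) ≫ biprod.desc (𝟙 H) (𝟙 H) with hS
  have comp_S : ∀ {T : C} (k : T ⟶ H), k ≫ S =
      biprod.lift (k ≫ dag m ≫ m) (k ≫ dag mperp ≫ mperp) ≫ biprod.desc (𝟙 H) (𝟙 H) := by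
    intro T k
    rw [hS, ← Category.assoc, comp_lift]
  have S_comp : ∀ {T : C} (k : H ⟶ T), S ≫ k =
      biprod.lift (dag m) (dag mperp) ≫ biprod.desc (m ≫ k) (mperp ≫ k) := by
    intro T k
    have h2 : (biprod.lift (dag m ≫ m) (dag mperp ≫ mperp) : H ⟶ H ⊞ H) =
        biprod.lift (dag m) (dag mperp) ≫ biprod.map m mperp := by
      apply biprod.hom_ext <;> simp
    rw [hS, Category.assoc, desc_comp, Category.id_comp, h2,
      Category.assoc, map_desc]
  -- m and mperp absorb S
  have mS : m ≫ S = m := by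
    rw [comp_S, ← Category.assoc, hm, Category.id_comp, ← Category.assoc, h1,
      zero_comp, lift0r, Category.comp_id]
  have mperpS : mperp ≫ S = mperp := by
    rw [comp_S, ← Category.assoc, wperp, zero_comp, ← Category.assoc, hmperp,
      Category.id_comp, lift0l, Category.comp_id]
  -- jointly, m and mperp are epic for maps killed by both
  have joint : ∀ {D : C} (h : H ⟶ D), m ≫ h = 0 → mperp ≫ h = 0 → h = 0 := by
    intro D h hmk hpk
    have hd : dag h ≫ dag m = 0 := by
      have h' := congrArg dag hmk
      rwa [dag_comp, dag_zero] at h'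
    obtain ⟨u, hu⟩ := KernelFork.IsLimit.lift' hker.some (dag h) hd
    simp only [Fork.ι_ofι] at hu
    have h3 : h = dag mperp ≫ dag u := by
      have h' := congrArg dag hu
      rw [dag_comp, dag_dag] at h'
      exact h'.symm
    have hdu : dag u = 0 := by
      have h4 : mperp ≫ h = dag u := by
        rw [h3, ← Category.assoc, hmperp, Category.id_comp]
      rw [← h4, hpk]
    rw [h3, hdu, comp_zero]
  -- the dagger equalizer of S and 𝟙 H
  obtain ⟨E, e, w, he, ⟨hE⟩⟩ := dag_eq S (𝟙 H)
  -- m and mperp factor through e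
  obtain ⟨a, ha⟩ := Fork.IsLimit.lift' hE m (by rw [mS, Category.comp_id])
  obtain ⟨b, hb⟩ := Fork.IsLimit.lift' hE mperp (by rw [mperpS, Category.comp_id])
  simp only [Fork.ι_ofι] at ha hb
  -- e is a kernel of some h, which must be 0
  obtain ⟨D, h, wh, ⟨hKL⟩⟩ := dag_mono_ker e he
  have hzero : h = 0 := by
    apply joint
    · rw [← ha, Category.assoc, wh, comp_zero]
    · rw [← hb, Category.assoc, wh, comp_zero]
  -- hence 𝟙 H factors through e, so S = 𝟙 H
  obtain ⟨t, ht⟩ := KernelFork.IsLimit.lift' hKL (𝟙 H) (by rw [hzero, comp_zero])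
  simp only [Fork.ι_ofι] at ht
  have total : S = 𝟙 H := by
    calc S = (t ≫ e) ≫ S := by rw [ht, Category.id_comp]
    _ = t ≫ e ≫ 𝟙 H := by rw [Category.assoc, w]
    _ = t ≫ e := by rw [Category.comp_id]
    _ = 𝟙 H := ht
  -- the bilimit: limit part
  have isLim : IsLimit (BinaryFan.mk (dag m) (dag mperp)) := by
    refine BinaryFan.isLimitMk
      (fun s => biprod.lift (s.fst ≫ m) (s.snd ≫ mperp) ≫ biprod.desc (𝟙 H) (𝟙 H))
      (fun s => ?_) (fun s => ?_) (fun s k hk1 hk2 => ?_)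
    · rw [Category.assoc, desc_comp, Category.id_comp]
      calc biprod.lift (s.fst ≫ m) (s.snd ≫ mperp) ≫ biprod.desc (dag m) (dag m)
          = biprod.lift s.fst s.snd ≫ biprod.map m mperp ≫ biprod.desc (dag m) (dag m) := by
            erw [← Category.assoc, lift_map]
        _ = biprod.lift s.fst s.snd ≫ biprod.desc (m ≫ dag m) (mperp ≫ dag m) := by
            erw [map_desc]
        _ = biprod.lift s.fst s.snd ≫ biprod.desc (𝟙 M) 0 := by erw [hm, wperp]; rfl
        _ = biprod.lift s.fst s.snd ≫ (biprod.fst : M ⊞ Mperp ⟶ M) := by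
            congr 1; apply biprod.hom_ext'
            · exact (biprod.inl_desc (X := M) (Y := Mperp) (𝟙 M) (0 : Mperp ⟶ M)).trans (biprod.inl_fst (X := M) (Y := Mperp)).symm
            · exact (biprod.inr_desc (X := M) (Y := Mperp) (𝟙 M) (0 : Mperp ⟶ M)).trans (biprod.inr_fst (X := M) (Y := Mperp)).symm
        _ = @id (s.pt ⟶ M) s.fst := biprod.lift_fst _ _
    · rw [Category.assoc, desc_comp, Category.id_comp]
      calc biprod.lift (s.fst ≫ m) (s.snd ≫ mperp) ≫ biprod.desc (dag mperp) (dag mperp)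
          = biprod.lift s.fst s.snd ≫ biprod.map m mperp ≫ biprod.desc (dag mperp) (dag mperp) := by
            erw [← Category.assoc, lift_map]
        _ = biprod.lift s.fst s.snd ≫ biprod.desc (m ≫ dag mperp) (mperp ≫ dag mperp) := by
            erw [map_desc]
        _ = biprod.lift s.fst s.snd ≫ biprod.desc 0 (𝟙 Mperp) := by erw [h1, hmperp]; rfl
        _ = biprod.lift s.fst s.snd ≫ (biprod.snd : M ⊞ Mperp ⟶ Mperp) := by
            congr 1; apply biprod.hom_ext'
            · exact (biprod.inl_desc (X := M) (Y := Mperp) (0 : M ⟶ Mperp) (𝟙 Mperp)).trans (biprod.inl_snd (X := M) (Y := Mperp)).symm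
            · exact (biprod.inr_desc (X := M) (Y := Mperp) (0 : M ⟶ Mperp) (𝟙 Mperp)).trans (biprod.inr_snd (X := M) (Y := Mperp)).symm
        _ = @id (s.pt ⟶ Mperp) s.snd := biprod.lift_snd _ _
    · calc k = k ≫ 𝟙 H := (Category.comp_id k).symm
        _ = k ≫ S := by rw [total]
        _ = biprod.lift (k ≫ dag m ≫ m) (k ≫ dag mperp ≫ mperp) ≫
            biprod.desc (𝟙 H) (𝟙 H) := comp_S k
        _ = biprod.lift (s.fst ≫ m) (s.snd ≫ mperp) ≫ biprod.desc (𝟙 H) (𝟙 H) := by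
            erw [← Category.assoc k (dag m) m, hk1, ← Category.assoc k (dag mperp) mperp, hk2]; rfl
  -- the bilimit: colimit part
  have isColim : IsColimit (BinaryCofan.mk m mperp) := by
    refine BinaryCofan.isColimitMk
      (fun s => biprod.lift (dag m) (dag mperp) ≫ biprod.desc s.inl s.inr)
      (fun s => ?_) (fun s => ?_) (fun s k hk1 hk2 => ?_)
    · erw [← Category.assoc, comp_lift, hm, h1, lift0r, Category.id_comp]
    · erw [← Category.assoc, comp_lift, wperp, hmperp, lift0l, Category.id_comp]
    · calc k = 𝟙 H ≫ k := (Category.id_comp k).symm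
        _ = S ≫ k := by rw [total]
        _ = biprod.lift (dag m) (dag mperp) ≫ biprod.desc (m ≫ k) (mperp ≫ k) := S_comp k
        _ = biprod.lift (dag m) (dag mperp) ≫ biprod.desc s.inl s.inr := by rw [hk1, hk2]
  refine ⟨h1, ⟨⟨isLim, isColim⟩⟩, ?_⟩
  rw [← Category.assoc, lift_map, Category.id_comp, Category.id_comp, ← hS, total]
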